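/- arXiv:1704.07165 — 2 statements merged into one kernel-verified Lean document; each statement's English description precedes it below -/
import Mathlib

section
/- Let T(Γ,ρ;Υ) be a generalized truncation with natural partition P_Γ, and let G̃ be a subgroup of Aut(T(Γ,ρ;Υ)) leaving P_Γ invariant (i.e., every element of G̃ permutes the parts of P_Γ). Then the map sending each g̃ ∈ G̃ to the permutation g of V(Γ) defined by (V(Γ̃_u))^{g̃} = V(Γ̃_{u^g}) is an injective group homomorphism from G̃ into Aut(Γ); in particular, G̃ is isomorphic to a subgroup of Aut(Γ). -/
open SimpleGraph

variable {V W : Type*}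

/-- The generalized truncation `T(Γ,ρ;Υ)` of a graph `Γ` by a graph `Υ`,
with respect to a labeling `ρ` of the darts of `Γ` by vertices of `Υ`. -/
def trunc (Γ : SimpleGraph V) (Υ : SimpleGraph W)
    (ρ : ∀ u w : V, Γ.Adj u w → W) : SimpleGraph (V × W) where
  Adj x y := (x.1 = y.1 ∧ Υ.Adj x.2 y.2) ∨
    (∃ h : Γ.Adj x.1 y.1, x.2 = ρ x.1 y.1 h ∧ y.2 = ρ y.1 x.1 h.symm)
  symm := by
    constructor
    rintro ⟨u, i⟩ ⟨w, j⟩ (⟨h1, h2⟩ | ⟨h, h1, h2⟩)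
    · exact Or.inl ⟨h1.symm, h2.symm⟩
    · exact Or.inr ⟨h.symm, h2, h1⟩
  loopless := by
    constructor
    rintro ⟨u, i⟩ (⟨_, h⟩ | ⟨h, _⟩)
    · exact Υ.loopless.irrefl _ h
    · exact Γ.loopless.irrefl _ h

/-- `ρ` is a vertex-neighborhood labeling of `Γ`: for every vertex `u`, the restriction
of `ρ` to the darts emanating from `u` is a bijection onto the vertex set of `Υ`. -/
def IsVNLabeling (Γ : SimpleGraph V) (ρ : ∀ u w : V, Γ.Adj u w → W) : Prop :=
  ∀ u : V, ∀ i : W, ∃! w : V, ∃ h : Γ.Adj u w, ρ u w h = i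

/-- A permutation of the vertices is an automorphism of the graph. -/
def IsAut (Γ : SimpleGraph V) (π : Equiv.Perm V) : Prop :=
  ∀ a b : V, Γ.Adj (π a) (π b) ↔ Γ.Adj a b

/-- The automorphism group of a graph, as a subgroup of the symmetric group. -/
def autG (Γ : SimpleGraph V) : Subgroup (Equiv.Perm V) where
  carrier := {π | IsAut Γ π}
  one_mem' := by intro a b; rfl
  mul_mem' := by
    intro f g hf hg a b
    exact (hf (g a) (g b)).trans (hg a b)
  inv_mem' := by
    intro f hf a b
    conv_rhs => rw [← f.apply_symm_apply a, ← f.apply_symm_apply b]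
    exact (hf _ _).symm

/-- If `Gt` is a subgroup of the automorphism group of a generalized
truncation `T(Γ,ρ;Υ)` leaving the natural partition invariant, then the map sending each
`gt ∈ Gt` to the induced permutation `g` of `V(Γ)` (determined by
`(V(Γ̃_u))^{gt} = V(Γ̃_{u^g})`) is an injective group homomorphism of `Gt` into `Aut(Γ)`;
in particular `Gt` is isomorphic to a subgroup of `Aut(Γ)`. -/
theorem stmt2 {V W : Type*} [Fintype V] [Fintype W] [DecidableEq V] [DecidableEq W]
    {k : ℕ} (Γ : SimpleGraph V) [DecidableRel Γ.Adj] (Υ : SimpleGraph W)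
    (hreg : Γ.IsRegularOfDegree k) (hcard : Fintype.card W = k)
    (ρ : ∀ u w : V, Γ.Adj u w → W) (hρ : IsVNLabeling Γ ρ)
    (Gt : Subgroup (Equiv.Perm (V × W))) (hGt : Gt ≤ autG (trunc Γ Υ ρ))
    (hinv : ∀ gt ∈ Gt, ∀ u : V, ∃ u' : V, ∀ i : W, (gt (u, i)).1 = u') :
    ∃ F : Gt →* Equiv.Perm V, Function.Injective F ∧
      (∀ gt : Gt, (F gt : Equiv.Perm V) ∈ autG Γ) ∧
      (∀ (gt : Gt) (u : V) (i : W), ((gt : Equiv.Perm (V × W)) (u, i)).1 = F gt u) := by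
  by_cases hW : Nonempty W
  case neg =>
    have hWE : IsEmpty W := not_nonempty_iff.mp hW
    refine ⟨1, ?_, ?_, ?_⟩
    · intro a b _
      have : IsEmpty (V × W) := by infer_instance
      have : Subsingleton (Equiv.Perm (V × W)) := by infer_instance
      exact Subtype.ext (Subsingleton.elim _ _)
    · intro gt; exact (autG Γ).one_mem
    · intro gt u i; exact (hWE.false i).elim
  case pos =>
    obtain ⟨i₀⟩ := hW
    let f : Gt → V → V := fun g u => ((g : Equiv.Perm (V × W)) (u, i₀)).1
    have hfst : ∀ (g : Gt) (u : V) (i : W),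
        ((g : Equiv.Perm (V × W)) (u, i)).1 = f g u := by
      intro g u i
      obtain ⟨u', hu'⟩ := hinv g.1 g.2 u
      show ((g : Equiv.Perm (V × W)) (u, i)).1 = ((g : Equiv.Perm (V × W)) (u, i₀)).1
      rw [hu' i, hu' i₀]
    have hli : ∀ (g : Gt) (u : V), f g⁻¹ (f g u) = u := by
      intro g u
      have h2 := hfst g⁻¹ (((g : Equiv.Perm (V × W)) (u, i₀)).1)
        (((g : Equiv.Perm (V × W)) (u, i₀)).2)
      rw [Prod.mk.eta] at h2
      have h3 : ((g⁻¹ : Gt) : Equiv.Perm (V × W)) ((g : Equiv.Perm (V × W)) (u, i₀))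
          = (u, i₀) := by simp
      rw [h3] at h2
      exact h2.symm
    let e : Gt → Equiv.Perm V := fun g =>
      { toFun := f g
        invFun := f g⁻¹
        left_inv := hli g
        right_inv := by
          have h := hli g⁻¹
          intro u
          simpa using h u }
    have hmul : ∀ g h : Gt, e (g * h) = e g * e h := by
      intro g h
      ext u
      have h1 := hfst g (((h : Equiv.Perm (V × W)) (u, i₀)).1)
        (((h : Equiv.Perm (V × W)) (u, i₀)).2)
      rw [Prod.mk.eta] at h1
      show (((g * h : Gt) : Equiv.Perm (V × W)) (u, i₀)).1 = f g (f h u)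
      rw [Subgroup.coe_mul, Equiv.Perm.mul_apply]
      exact h1
    have hadj : ∀ (g : Gt) (a b : V), Γ.Adj a b → Γ.Adj (f g a) (f g b) := by
      intro g a b hab
      have hT : (trunc Γ Υ ρ).Adj (a, ρ a b hab) (b, ρ b a hab.symm) :=
        Or.inr ⟨hab, rfl, rfl⟩
      have h2 : (trunc Γ Υ ρ).Adj ((g : Equiv.Perm (V × W)) (a, ρ a b hab))
          ((g : Equiv.Perm (V × W)) (b, ρ b a hab.symm)) := (hGt g.2 _ _).mpr hT
      rcases h2 with ⟨h3, _⟩ | ⟨h3, _⟩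
      · exfalso
        rw [hfst g a _, hfst g b _] at h3
        exact hab.ne ((hli g a) ▸ (hli g b) ▸ congrArg (f g⁻¹) h3)
      · rwa [hfst g a _, hfst g b _] at h3
    have haut : ∀ (g : Gt) (a b : V), Γ.Adj (f g a) (f g b) ↔ Γ.Adj a b := by
      intro g a b
      refine ⟨fun hh => ?_, hadj g a b⟩
      have h2 := hadj g⁻¹ (f g a) (f g b) hh
      rwa [hli g a, hli g b] at h2
    have hinj : ∀ g : Gt, e g = 1 → g = 1 := by
      intro g hg
      have hg' : ∀ u : V, f g u = u := fun u => Equiv.ext_iff.mp hg u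
      refine Subtype.ext (Equiv.ext ?_)
      rintro ⟨u, i⟩
      obtain ⟨w, ⟨h, hw⟩, _⟩ := hρ u i
      have hT : (trunc Γ Υ ρ).Adj (u, i) (w, ρ w u h.symm) :=
        Or.inr ⟨h, hw.symm, rfl⟩
      have h2 : (trunc Γ Υ ρ).Adj ((g : Equiv.Perm (V × W)) (u, i))
          ((g : Equiv.Perm (V × W)) (w, ρ w u h.symm)) := (hGt g.2 _ _).mpr hT
      have hx1 : ((g : Equiv.Perm (V × W)) (u, i)).1 = u := by
        rw [hfst g u i]; exact hg' u
      have hy1 : ((g : Equiv.Perm (V × W)) (w, ρ w u h.symm)).1 = w := by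
        rw [hfst g w _]; exact hg' w
      rcases h2 with ⟨h3, _⟩ | ⟨h3, hx2, _⟩
      · rw [hx1, hy1] at h3
        exact absurd h3 h.ne
      · simp only [hx1, hy1] at h3 hx2
        have hsnd : ((g : Equiv.Perm (V × W)) (u, i)).2 = i := hx2.trans hw
        show (g : Equiv.Perm (V × W)) (u, i) = (u, i)
        exact Prod.ext hx1 hsnd
    refine ⟨MonoidHom.mk' e hmul, ?_, ?_, ?_⟩
    · rw [injective_iff_map_eq_one]
      exact hinj
    · intro g a b
      exact haut g a b
    · intro g u i
      exact hfst g u i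
end

section
/- Let Γ be a finite simple k-regular graph of girth g and let T(Γ,ρ;Υ) be a generalized truncation. If Υ is connected and each edge of Υ lies on at least one cycle of Υ of length smaller than 2g, then every automorphism of T(Γ,ρ;Υ) leaves the natural partition P_Γ invariant, and consequently the entire automorphism group Aut(T(Γ,ρ;Υ)) projects injectively onto a subgroup of Aut(Γ) (via the map sending g̃ to the permutation g of V(Γ) with (V(Γ̃_u))^{g̃} = V(Γ̃_{u^g})). -/
open SimpleGraph

variable {V W : Type*}

set_option linter.unusedSectionVars false


section ListLemma
variable {α : Type*} (b : α → Prop) [DecidablePred b]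

/-- Contribution of an optional element: 1 if present and satisfies `b`. -/
def hbO (o : Option α) : ℕ := o.elim 0 (fun a => if b a then 1 else 0)

@[simp] lemma hbO_none : hbO b none = 0 := rfl

@[simp] lemma hbO_some (a : α) : hbO b (some a) = if b a then 1 else 0 := rfl

lemma hbO_le (o : Option α) : hbO b o ≤ 1 := by
  cases o with
  | none => simp [hbO]
  | some a =>
    simp only [hbO, Option.elim]
    split <;> simp

lemma two_mul_countP_le : ∀ l : List α, l ≠ [] →
    l.Chain' (fun x y => ¬(b x ∧ b y)) →
    2 * l.countP (fun a => decide (b a)) + 1 ≤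
      l.length + hbO b l.head? + hbO b l.getLast? := by
  intro l
  induction l with
  | nil => simp
  | cons a t ih =>
    intro _ hch
    cases t with
    | nil =>
      simp only [List.countP_cons, List.countP_nil, List.length_cons, List.length_nil,
        List.head?_cons, List.getLast?_singleton, hbO, Option.elim]
      rcases Decidable.em (b a) with h | h <;> simp [h]
    | cons x xs =>
      simp only [List.Chain', List.isChain_cons_cons] at hch
      have ih' := ih (by simp) hch.2
      rw [List.countP_cons]
      rw [List.getLast?_cons_cons]
      generalize hL : hbO b (x :: xs).getLast? = L at ih' ⊢
      by_cases hba : b a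
      · have hbx : ¬ b x := fun h => hch.1 ⟨hba, h⟩
        simp only [List.head?_cons, hbO_some, hba, hbx, if_true, if_false,
          decide_eq_true_eq, List.length_cons] at ih' ⊢
        omega
      · simp only [List.head?_cons, hbO_some, hba, if_false,
          decide_eq_true_eq, List.length_cons] at ih' ⊢
        have h1 : (if b x then 1 else 0) ≤ 1 := by split <;> simp
        omega

end ListLemma

lemma chain'_conj {α : Type*} {R S : α → α → Prop} :
    ∀ {l : List α}, l.Chain' R → l.Chain' S → l.Chain' (fun a b => R a b ∧ S a b)
  | [], _, _ => List.isChain_nil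
  | [_], _, _ => List.isChain_singleton _
  | _ :: _ :: _, hR, hS => by
    simp only [List.Chain', List.isChain_cons_cons] at hR hS ⊢
    exact ⟨⟨hR.1, hS.1⟩, chain'_conj hR.2 hS.2⟩

section Trunc
variable (Γ : SimpleGraph V) (Υ : SimpleGraph W) (ρ : ∀ u w : V, Γ.Adj u w → W)

lemma blue_of_adj {x y : V × W} (h : (trunc Γ Υ ρ).Adj x y) (hne : x.1 ≠ y.1) :
    ∃ hΓ : Γ.Adj x.1 y.1, x.2 = ρ x.1 y.1 hΓ ∧ y.2 = ρ y.1 x.1 hΓ.symm :=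
  h.resolve_left (fun hc => hne hc.1)

/-- two consecutive blue darts must carry the same edge -/
lemma blue_blue (hρ : IsVNLabeling Γ ρ) {d1 d2 : (trunc Γ Υ ρ).Dart}
    (hmid : d1.snd = d2.fst) (h1 : d1.fst.1 ≠ d1.snd.1) (h2 : d2.fst.1 ≠ d2.snd.1) :
    d1.edge = d2.edge := by
  obtain ⟨⟨⟨a, ia⟩, ⟨m, jm⟩⟩, hadj1⟩ := d1
  obtain ⟨⟨⟨m2, jm2⟩, ⟨c, kc⟩⟩, hadj2⟩ := d2
  dsimp only at hmid h1 h2 ⊢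
  injection hmid with h3 h4
  subst h3; subst h4
  obtain ⟨ha, hx2, hm2⟩ := blue_of_adj Γ Υ ρ hadj1 h1
  obtain ⟨hb, hm2', hz2⟩ := blue_of_adj Γ Υ ρ hadj2 h2
  simp only at ha hx2 hm2 hb hm2' hz2
  have hac : a = c := (hρ m jm).unique ⟨ha.symm, hm2.symm⟩ ⟨hb, hm2'.symm⟩
  subst hac
  have hkc : kc = ia := hz2.trans hx2.symm
  subst hkc
  show s(_, _) = s(_, _)
  exact Sym2.eq_swap.symm ▸ rfl

variable [DecidableEq V]

noncomputable def projWalk : ∀ {x y : V × W}, (trunc Γ Υ ρ).Walk x y → Γ.Walk x.1 y.1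
  | _, _, .nil => .nil
  | x, _, .cons (v := z) h p =>
    if hred : x.1 = z.1 then (projWalk p).copy hred.symm rfl
    else .cons (blue_of_adj Γ Υ ρ h hred).choose (projWalk p)

lemma projWalk_length {x y : V × W} (p : (trunc Γ Υ ρ).Walk x y) :
    (projWalk Γ Υ ρ p).length = p.darts.countP (fun d => decide (d.fst.1 ≠ d.snd.1)) := by
  induction p with
  | nil => simp [projWalk]
  | @cons x z y h p ih =>
    rw [Walk.darts_cons, List.countP_cons]
    by_cases hred : x.1 = z.1
    · simp [projWalk, hred, ih]
    · simp [projWalk, hred, ih]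

lemma blue_edge_eq {u w : V} (hadj : Γ.Adj u w) {x z : V × W}
    (h : (trunc Γ Υ ρ).Adj x z) (hne : x.1 ≠ z.1) (he : s(x.1, z.1) = s(u, w)) :
    s(x, z) = s(((u, ρ u w hadj) : V × W), ((w, ρ w u hadj.symm) : V × W)) := by
  obtain ⟨a, i⟩ := x; obtain ⟨cc, k⟩ := z
  obtain ⟨hΓ, hx2, hz2⟩ := blue_of_adj Γ Υ ρ h hne
  dsimp only at hΓ hx2 hz2 hne he ⊢
  subst hx2; rw [hz2]
  rcases Sym2.eq_iff.mp he with ⟨rfl, rfl⟩ | ⟨rfl, rfl⟩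
  · rfl
  · exact Sym2.eq_swap

lemma projWalk_mem_edges : ∀ {x y : V × W} (p : (trunc Γ Υ ρ).Walk x y)
    (d : (trunc Γ Υ ρ).Dart), d ∈ p.darts → d.fst.1 ≠ d.snd.1 →
    s(d.fst.1, d.snd.1) ∈ (projWalk Γ Υ ρ p).edges := by
  intro x y p
  induction p with
  | nil => intro d hd _; simp at hd
  | @cons x z y h p ih =>
    intro d hd hb
    rw [Walk.darts_cons, List.mem_cons] at hd
    by_cases hred : x.1 = z.1
    · rcases hd with rfl | hd
      · exact absurd hred hb
      · simp only [projWalk, dif_pos hred, Walk.edges_copy]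
        exact ih d hd hb
    · simp only [projWalk, dif_neg hred, Walk.edges_cons, List.mem_cons]
      rcases hd with rfl | hd
      · left; rfl
      · right; exact ih d hd hb

lemma projWalk_mem_rev {u w : V} (hadj : Γ.Adj u w) :
    ∀ {x y : V × W} (p : (trunc Γ Υ ρ).Walk x y),
      s(u, w) ∈ (projWalk Γ Υ ρ p).edges →
      s(((u, ρ u w hadj) : V × W), ((w, ρ w u hadj.symm) : V × W)) ∈ p.edges := by
  intro x y p
  induction p with
  | nil => intro hmem; simp [projWalk] at hmem
  | @cons x z y h p ih =>
    intro hmem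
    by_cases hred : x.1 = z.1
    · simp only [projWalk, dif_pos hred, Walk.edges_copy] at hmem
      rw [Walk.edges_cons]
      exact List.mem_cons_of_mem _ (ih hmem)
    · simp only [projWalk, dif_neg hred, Walk.edges_cons, List.mem_cons] at hmem
      rw [Walk.edges_cons]
      rcases hmem with heq | hmem
      · exact List.mem_cons.mpr (Or.inl (blue_edge_eq Γ Υ ρ hadj h hred heq.symm).symm)
      · exact List.mem_cons_of_mem _ (ih hmem)

lemma projWalk_count_le_one {u w : V} (hadj : Γ.Adj u w) :
    ∀ {x y : V × W} (p : (trunc Γ Υ ρ).Walk x y), p.IsTrail →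
      (projWalk Γ Υ ρ p).edges.count s(u, w) ≤ 1 := by
  intro x y p
  induction p with
  | nil => intro _; simp [projWalk]
  | @cons x z y h p ih =>
    intro ht
    rw [Walk.isTrail_cons] at ht
    by_cases hred : x.1 = z.1
    · simp only [projWalk, dif_pos hred, Walk.edges_copy]
      exact ih ht.1
    · simp only [projWalk, dif_neg hred, Walk.edges_cons]
      rw [List.count_cons]
      by_cases heq : s(x.1, z.1) = s(u, w)
      · have h0 : s(u, w) ∉ (projWalk Γ Υ ρ p).edges := by
          intro hmem
          exact ht.2 (by
            rw [blue_edge_eq Γ Υ ρ hadj h hred heq]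
            exact projWalk_mem_rev Γ Υ ρ hadj p hmem)
        rw [List.count_eq_zero.mpr h0]
        split <;> omega
      · have := ih ht.1
        rw [if_neg (by simp only [beq_iff_eq]; exact heq)]
        omega

lemma walk_split {a c : V} (p : Γ.Walk a c) :
    ∀ (e : Sym2 V), e ∈ p.edges →
    ∃ (u w : V) (hadj : Γ.Adj u w) (q : Γ.Walk a u) (r : Γ.Walk w c),
      e = s(u, w) ∧ p.edges = q.edges ++ e :: r.edges := by
  induction p with
  | nil => intro e he; simp at he
  | @cons a z cc h p ih =>
    intro e he
    rw [Walk.edges_cons, List.mem_cons] at he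
    by_cases heq : e = s(a, z)
    · exact ⟨a, z, h, Walk.nil, p, heq, by simp [heq]⟩
    · obtain ⟨u, w, hadj, q, r, h1, h2⟩ := ih e (he.resolve_left heq)
      exact ⟨u, w, hadj, Walk.cons h q, r, h1, by simp [h2]⟩

lemma darts_getLast_snd : ∀ {x y : V × W} (p : (trunc Γ Υ ρ).Walk x y)
    (dl : (trunc Γ Υ ρ).Dart), p.darts.getLast? = some dl → dl.snd = y := by
  intro x y p
  induction p with
  | nil => intro dl h; simp at h
  | @cons x z y h p ih =>
    intro dl hdl
    cases p with
    | nil =>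
      simp only [Walk.darts_cons, Walk.darts_nil, List.getLast?_singleton,
        Option.some.injEq] at hdl
      rw [← hdl]
    | cons h' p' =>
      rw [Walk.darts_cons, Walk.darts_cons, List.getLast?_cons_cons] at hdl
      exact ih dl (by rw [Walk.darts_cons]; exact hdl)

lemma darts_head_fst : ∀ {x y : V × W} (p : (trunc Γ Υ ρ).Walk x y)
    (dh : (trunc Γ Υ ρ).Dart), p.darts.head? = some dh → dh.fst = x := by
  intro x y p
  cases p with
  | nil => intro dh h; simp at h
  | cons h p =>
    intro dh hdh
    simp only [Walk.darts_cons, List.head?_cons, Option.some.injEq] at hdh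
    rw [← hdh]

lemma cycle_darts_red (hρ : IsVNLabeling Γ ρ) {g : ℕ} (hg : Γ.egirth = (g : ℕ∞))
    {x : V × W} (c : (trunc Γ Υ ρ).Walk x x) (hc : c.IsCycle) (hlen : c.length < 2 * g) :
    ∀ d ∈ c.darts, d.fst.1 = d.snd.1 := by
  by_contra hcon
  push_neg at hcon
  obtain ⟨d0, hd0, hblue⟩ := hcon
  have htrail : c.IsTrail := hc.isCircuit.isTrail
  have hpair : c.darts.Pairwise (fun d1 d2 => d1.edge ≠ d2.edge) := by
    have hnd : (c.darts.map Dart.edge).Nodup := htrail.edges_nodup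
    exact List.pairwise_map.mp hnd
  have hchain : c.darts.Chain'
      (fun d1 d2 => ¬((d1.fst.1 ≠ d1.snd.1) ∧ (d2.fst.1 ≠ d2.snd.1))) := by
    have h1 := Walk.isChain_dartAdj_darts c
    have h2 := hpair.isChain
    exact (chain'_conj h1 h2).imp
      (fun a b hab hcontra => hab.2 (blue_blue Γ Υ ρ hρ hab.1 hcontra.1 hcontra.2))
  have hdartsne : c.darts ≠ [] := by
    have h3 := hc.three_le_length
    intro hnil
    rw [← Walk.length_darts, hnil] at h3
    simp at h3
  have hkey := two_mul_countP_le
    (fun d : (trunc Γ Υ ρ).Dart => d.fst.1 ≠ d.snd.1) c.darts hdartsne hchain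
  beta_reduce at hkey
  have hwrap : hbO (fun d : (trunc Γ Υ ρ).Dart => d.fst.1 ≠ d.snd.1) c.darts.head? +
      hbO (fun d : (trunc Γ Υ ρ).Dart => d.fst.1 ≠ d.snd.1) c.darts.getLast? ≤ 1 := by
    by_contra hw
    push_neg at hw
    cases hh : c.darts.head? with
    | none =>
      rw [hh] at hw
      have := hbO_le (fun d : (trunc Γ Υ ρ).Dart => d.fst.1 ≠ d.snd.1) c.darts.getLast?
      simp only [hbO_none] at hw
      omega
    | some dh =>
      cases hl : c.darts.getLast? with
      | none =>
        rw [hh, hl] at hw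
        have := hbO_le (fun d : (trunc Γ Υ ρ).Dart => d.fst.1 ≠ d.snd.1) (some dh)
        simp only [hbO_none] at hw
        omega
      | some dl =>
        rw [hh, hl] at hw
        simp only [hbO_some] at hw
        by_cases b1 : dh.fst.1 ≠ dh.snd.1
        · by_cases b2 : dl.fst.1 ≠ dl.snd.1
          · -- both blue: contradiction
            have hmid : dl.snd = dh.fst :=
              (darts_getLast_snd Γ Υ ρ c dl hl).trans (darts_head_fst Γ Υ ρ c dh hh).symm
            have hedge : dl.edge = dh.edge := blue_blue Γ Υ ρ hρ hmid b2 b1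
            cases hds : c.darts with
            | nil => exact hdartsne hds
            | cons d0' rest =>
              have hdh' : d0' = dh := by
                rw [hds] at hh
                simpa using hh
              cases rest with
              | nil =>
                rw [hds] at hl
                simp only [List.getLast?_singleton, Option.some.injEq] at hl
                have hdl_dh : dl = dh := hl.symm.trans hdh'
                exact absurd (hdl_dh ▸ hmid).symm ((trunc Γ Υ ρ).ne_of_adj dh.adj)
              | cons r1 rest' =>
                have hdlmem : dl ∈ r1 :: rest' := by
                  rw [hds, List.getLast?_cons_cons] at hl
                  exact List.mem_of_getLast? hl
                have hpair' := hpair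
                rw [hds] at hpair'
                exact (List.pairwise_cons.mp hpair').1 dl hdlmem
                  (by rw [hdh']; exact hedge.symm)
          · rw [if_neg b2] at hw
            have hle1 : (if dh.fst.1 ≠ dh.snd.1 then 1 else 0) ≤ 1 := by split <;> simp
            omega
        · simp only [if_neg b1] at hw
          have : (if dl.fst.1 ≠ dl.snd.1 then 1 else 0) ≤ 1 := by split <;> simp
          omega
  -- Part II : g ≤ number of blue darts
  obtain ⟨hadj, hfst2, hsnd2⟩ := blue_of_adj Γ Υ ρ d0.adj hblue
  have hmemE : s(d0.fst.1, d0.snd.1) ∈ (projWalk Γ Υ ρ c).edges :=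
    projWalk_mem_edges Γ Υ ρ c d0 hd0 hblue
  obtain ⟨u', w', hadj', q, r, he, hedges⟩ := walk_split Γ (projWalk Γ Υ ρ c) _ hmemE
  have hcount := projWalk_count_le_one Γ Υ ρ hadj c htrail
  rw [hedges, List.count_append, List.count_cons] at hcount
  have hq0 : s(d0.fst.1, d0.snd.1) ∉ q.edges := by
    intro hq
    have := List.count_pos_iff.mpr hq
    simp at hcount
    omega
  have hr0 : s(d0.fst.1, d0.snd.1) ∉ r.edges := by
    intro hr
    have := List.count_pos_iff.mpr hr
    simp at hcount
    omega
  have hqe : ∀ e', e' ∈ (r.append q).edges → e' ∉ ({s(d0.fst.1, d0.snd.1)} : Set (Sym2 V)) := by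
    intro e' he' hmem'
    rw [Set.mem_singleton_iff] at hmem'
    subst hmem'
    rw [Walk.edges_append, List.mem_append] at he'
    exact he'.elim hr0 hq0
  have hW3path : ((r.append q).toDeleteEdges _ hqe).bypass.IsPath := Walk.bypass_isPath _
  have hsub : ∀ e', e' ∈ ((r.append q).toDeleteEdges _ hqe).bypass.edges → e' ∈ Γ.edgeSet :=
    fun e' he' =>
      edgeSet_mono (Γ.deleteEdges_le _) (Walk.edges_subset_edgeSet _ he')
  set W4 := (((r.append q).toDeleteEdges _ hqe).bypass).transfer Γ hsub with hW4
  have hW4path : W4.IsPath := hW3path.transfer hsub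
  have hW4e : s(d0.fst.1, d0.snd.1) ∉ W4.edges := by
    rw [hW4, Walk.edges_transfer]
    intro hmem'
    have h5 := Walk.edges_bypass_subset _ hmem'
    rw [Walk.edges_transfer] at h5
    rw [Walk.edges_append, List.mem_append] at h5
    exact h5.elim hr0 hq0
  have hCyc : (Walk.cons hadj' W4).IsCycle :=
    (Walk.cons_isCycle_iff W4 hadj').mpr ⟨hW4path, by rw [← he]; exact hW4e⟩
  have hgle : (g : ℕ∞) ≤ ((Walk.cons hadj' W4).length : ℕ∞) := by
    rw [← hg]
    exact le_egirth.mp le_rfl u' _ hCyc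
  have hgle' : g ≤ W4.length + 1 := by
    rw [Walk.length_cons] at hgle
    exact_mod_cast hgle
  have hlen4 : W4.length ≤ r.length + q.length := by
    rw [hW4, Walk.length_transfer]
    calc ((r.append q).toDeleteEdges _ hqe).bypass.length
        ≤ ((r.append q).toDeleteEdges _ hqe).length := Walk.length_bypass_le _
      _ = (r.append q).length := Walk.length_transfer _ _
      _ = r.length + q.length := Walk.length_append _ _
  have hBlen : q.length + 1 + r.length = (projWalk Γ Υ ρ c).length := by
    have h6 := congrArg List.length hedges
    rw [Walk.length_edges, List.length_append, List.length_cons,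
      Walk.length_edges, Walk.length_edges] at h6
    omega
  have hproj := projWalk_length Γ Υ ρ c
  rw [← Walk.length_darts c] at hlen
  omega

lemma rho_congr {u u' w w' : V} (hu : u = u') (hw : w = w') (h : Γ.Adj u w)
    (h' : Γ.Adj u' w') : ρ u w h = ρ u' w' h' := by
  subst hu; subst hw; rfl

lemma aut_red (hρ : IsVNLabeling Γ ρ) {g : ℕ} (hg : Γ.egirth = (g : ℕ∞))
    (hshort : ∀ i j : W, Υ.Adj i j → ∃ (x0 : W) (cyc : Υ.Walk x0 x0),
      cyc.IsCycle ∧ s(i, j) ∈ cyc.edges ∧ cyc.length < 2 * g)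
    {π : Equiv.Perm (V × W)} (hπ : IsAut (trunc Γ Υ ρ) π)
    {u : V} {i j : W} (hij : Υ.Adj i j) :
    (π (u, i)).1 = (π (u, j)).1 := by
  obtain ⟨x0, cyc, hcyc, hmem, hlt⟩ := hshort i j hij
  let ι : Υ →g (trunc Γ Υ ρ) := ⟨fun i => (u, i), fun {a b} hab => Or.inl ⟨rfl, hab⟩⟩
  have hιinj : Function.Injective ι := fun a b hab => (Prod.ext_iff.mp hab).2
  let σ : (trunc Γ Υ ρ) ≃g (trunc Γ Υ ρ) := ⟨π, fun {a b} => hπ a b⟩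
  let cT := (cyc.map ι).map σ.toHom
  have hcT : cT.IsCycle :=
    (Walk.map_isCycle_iff_of_injective σ.toEquiv.injective).mpr
      ((Walk.map_isCycle_iff_of_injective hιinj).mpr hcyc)
  have hlen' : cT.length < 2 * g := by
    simpa only [cT, Walk.length_map] using hlt
  have hmem1 : s(((u, i) : V × W), ((u, j) : V × W)) ∈ (cyc.map ι).edges := by
    rw [Walk.edges_map]
    have h9 := List.mem_map_of_mem (f := Sym2.map ⇑ι) hmem
    rwa [Sym2.map_pair_eq] at h9
  have hmem' : s(π (u, i), π (u, j)) ∈ cT.edges := by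
    show _ ∈ (Walk.map σ.toHom (cyc.map ι)).edges
    rw [Walk.edges_map]
    have h9 := List.mem_map_of_mem (f := Sym2.map ⇑σ.toHom) hmem1
    rwa [Sym2.map_pair_eq] at h9
  have hred := cycle_darts_red Γ Υ ρ hρ hg cT hcT hlen'
  obtain ⟨d, hd, hde⟩ := List.mem_map.mp hmem'
  have hdr := hred d hd
  rcases Sym2.eq_iff.mp (hde : s(d.fst, d.snd) = s(π (u, i), π (u, j))) with
    ⟨h1, h2⟩ | ⟨h1, h2⟩
  · rw [← h1, ← h2]; exact hdr
  · rw [← h1, ← h2]; exact hdr.symm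

lemma aut_cell (hρ : IsVNLabeling Γ ρ) {g : ℕ} (hg : Γ.egirth = (g : ℕ∞))
    (hshort : ∀ i j : W, Υ.Adj i j → ∃ (x0 : W) (cyc : Υ.Walk x0 x0),
      cyc.IsCycle ∧ s(i, j) ∈ cyc.edges ∧ cyc.length < 2 * g)
    (hconn : Υ.Connected)
    {π : Equiv.Perm (V × W)} (hπ : IsAut (trunc Γ Υ ρ) π)
    (u : V) (i j : W) :
    (π (u, i)).1 = (π (u, j)).1 := by
  obtain ⟨p⟩ := hconn.preconnected i j
  induction p with
  | nil => rfl
  | cons hab p ih => exact (aut_red Γ Υ ρ hρ hg hshort hπ hab).trans ih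

end Trunc

/-- Let `Γ` be a finite `k`-regular graph of girth `g` and let
`T(Γ,ρ;Υ)` be a generalized truncation. If `Υ` is connected and each of its edges lies on
a cycle of length smaller than `2 * g`, then every automorphism of `T(Γ,ρ;Υ)` leaves the
natural partition invariant, and the whole automorphism group of `T(Γ,ρ;Υ)` projects
injectively onto a subgroup of `Aut(Γ)`. -/
theorem stmt3 {V W : Type*} [Fintype V] [Fintype W] [DecidableEq V] [DecidableEq W]
    {k g : ℕ} (Γ : SimpleGraph V) [DecidableRel Γ.Adj] (Υ : SimpleGraph W)
    (hreg : Γ.IsRegularOfDegree k) (hcard : Fintype.card W = k)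
    (hgirth : Γ.egirth = (g : ℕ∞))
    (ρ : ∀ u w : V, Γ.Adj u w → W) (hρ : IsVNLabeling Γ ρ)
    (hconn : Υ.Connected)
    (hshort : ∀ i j : W, Υ.Adj i j → ∃ (x : W) (c : Υ.Walk x x),
      c.IsCycle ∧ s(i, j) ∈ c.edges ∧ c.length < 2 * g) :
    (∀ π ∈ autG (trunc Γ Υ ρ), ∀ u : V, ∃ u' : V, ∀ i : W, (π (u, i)).1 = u') ∧
    ∃ F : autG (trunc Γ Υ ρ) →* Equiv.Perm V, Function.Injective F ∧
      (∀ π : autG (trunc Γ Υ ρ), (F π : Equiv.Perm V) ∈ autG Γ) ∧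
      (∀ (π : autG (trunc Γ Υ ρ)) (u : V) (i : W),
        ((π : Equiv.Perm (V × W)) (u, i)).1 = F π u) := by
  obtain ⟨w0⟩ : Nonempty W := hconn.nonempty
  have hcell : ∀ π : Equiv.Perm (V × W), IsAut (trunc Γ Υ ρ) π →
      ∀ (u : V) (i j : W), (π (u, i)).1 = (π (u, j)).1 :=
    fun π hπ u i j => aut_cell Γ Υ ρ hρ hgirth hshort hconn hπ u i j
  set f : autG (trunc Γ Υ ρ) → V → V :=
    fun π u => ((π : Equiv.Perm (V × W)) (u, w0)).1 with hfdef
  have hf : ∀ (π : autG (trunc Γ Υ ρ)) (u : V) (i : W),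
      ((π : Equiv.Perm (V × W)) (u, i)).1 = f π u :=
    fun π u i => hcell π.1 π.2 u i w0
  have hfmul : ∀ (π σ : autG (trunc Γ Υ ρ)) (u : V), f (π * σ) u = f π (f σ u) := by
    intro π σ u
    show ((π.1 * σ.1) (u, w0)).1 = _
    rw [Equiv.Perm.mul_apply]
    exact hf π (σ.1 (u, w0)).1 (σ.1 (u, w0)).2
  have hfinv : ∀ (π : autG (trunc Γ Υ ρ)) (u : V), f π⁻¹ (f π u) = u := by
    intro π u
    have h1 : (π⁻¹ : autG (trunc Γ Υ ρ)).1 ((π.1 (u, w0)).1, (π.1 (u, w0)).2) = (u, w0) :=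
      Equiv.symm_apply_apply π.1 (u, w0)
    calc f π⁻¹ (f π u) = ((π⁻¹ : autG (trunc Γ Υ ρ)).1 ((π.1 (u, w0)).1, (π.1 (u, w0)).2)).1 :=
          hcell (π⁻¹ : autG (trunc Γ Υ ρ)).1 (π⁻¹ : autG (trunc Γ Υ ρ)).2 _ w0 _
      _ = u := by rw [h1]
  let F0 : autG (trunc Γ Υ ρ) → Equiv.Perm V := fun π =>
    { toFun := f π
      invFun := f π⁻¹
      left_inv := hfinv π
      right_inv := fun u => by
        have h2 := hfinv π⁻¹ u
        rwa [inv_inv] at h2 }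
  have hF0apply : ∀ (π : autG (trunc Γ Υ ρ)) (u : V), F0 π u = f π u := fun _ _ => rfl
  let F : autG (trunc Γ Υ ρ) →* Equiv.Perm V :=
    MonoidHom.mk' F0 (fun π σ => Equiv.ext fun u => by
      rw [Equiv.Perm.mul_apply]
      exact hfmul π σ u)
  have hdir : ∀ (π : autG (trunc Γ Υ ρ)) (a b : V), Γ.Adj a b → Γ.Adj (f π a) (f π b) := by
    intro π a b hab
    have hadjT : (trunc Γ Υ ρ).Adj (a, ρ a b hab) (b, ρ b a hab.symm) :=
      Or.inr ⟨hab, rfl, rfl⟩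
    have h2 := (π.2 _ _).mpr hadjT
    have hne : (π.1 (a, ρ a b hab)).1 ≠ (π.1 (b, ρ b a hab.symm)).1 := by
      rw [hf π a _, hf π b _]
      intro hcontra
      exact hab.ne ((F0 π).injective hcontra)
    obtain ⟨hΓ', -, -⟩ := blue_of_adj Γ Υ ρ h2 hne
    rwa [hf π a _, hf π b _] at hΓ'
  refine ⟨?_, F, ?_, ?_, ?_⟩
  · intro π hπ u
    exact ⟨(π (u, w0)).1, fun i => hcell π hπ u i w0⟩
  · rw [injective_iff_map_eq_one]
    intro π hπ1
    have hfix : ∀ (u : V) (i : W), π.1 (u, i) = (u, i) := by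
      intro u i
      have hfst : ∀ j : W, (π.1 (u, j)).1 = u := by
        intro j
        have h3 : F0 π u = u := by
          have := DFunLike.congr_fun hπ1 u
          exact this
        exact (hf π u j).trans h3
      obtain ⟨w, ⟨hadj, hρw⟩, -⟩ := hρ u i
      subst hρw
      have hadjT : (trunc Γ Υ ρ).Adj (u, ρ u w hadj) (w, ρ w u hadj.symm) :=
        Or.inr ⟨hadj, rfl, rfl⟩
      have h2 := (π.2 _ _).mpr hadjT
      have hwfst : ∀ j : W, (π.1 (w, j)).1 = w := by
        intro j
        have h3 : F0 π w = w := DFunLike.congr_fun hπ1 w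
        exact (hf π w j).trans h3
      have hne : (π.1 (u, ρ u w hadj)).1 ≠ (π.1 (w, ρ w u hadj.symm)).1 := by
        rw [hfst, hwfst]
        exact hadj.ne
      obtain ⟨hΓ', ha, -⟩ := blue_of_adj Γ Υ ρ h2 hne
      refine Prod.ext_iff.mpr ⟨hfst _, ?_⟩
      exact ha.trans (rho_congr Γ ρ (hfst _) (hwfst _) hΓ' hadj)
    exact Subtype.ext (Equiv.ext fun p => by obtain ⟨u, i⟩ := p; exact hfix u i)
  · intro π a b
    constructor
    · intro h
      have h' : Γ.Adj (f π a) (f π b) := h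
      have h4 := hdir π⁻¹ _ _ h'
      rwa [hfinv π a, hfinv π b] at h4
    · exact hdir π a b
  · exact fun π u i => hf π u i
end
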